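/- Let D₁, ..., Dₙ be caps on S^d with spherical radii α₁, ..., αₙ whose sum α = α₁ + ... + αₙ is at most π/2. Let uᵢ be the center of Dᵢ, set wᵢ := sin(αᵢ)·uᵢ and w := w₁ + ... + wₙ. If |w| ≥ sin α and |w − wᵢ| ≤ sin(α − αᵢ) for all i, then the cap centered at w/|w| with spherical radius α covers D₁ ∪ ... ∪ Dₙ. -/
import Mathlib

open Real RealInnerProductSpace

set_option maxHeartbeats 1000000 in

/-- Lemma 1 (first part) of the paper: caps `D i` on `S^d` have centers `u i` and
spherical radii `α i` with total radius `α ≤ π/2`.  With `w i := sin (α i) • u i`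
and `w := ∑ w i`, if `‖w‖ ≥ sin α` and `‖w - w i‖ ≤ sin (α - α i)` for all `i`,
then the cap centered at `w / ‖w‖` of spherical radius `α` covers `⋃ D i`. -/
theorem cap_covers_caps
    (d n : ℕ) (u : Fin n → EuclideanSpace ℝ (Fin (d + 1))) (α : Fin n → ℝ)
    (hu : ∀ i, ‖u i‖ = 1) (hα : ∀ i, 0 < α i) (hsum : ∑ i, α i ≤ π / 2)
    (w : Fin n → EuclideanSpace ℝ (Fin (d + 1)))
    (hw : ∀ i, w i = Real.sin (α i) • u i)
    (hnorm : Real.sin (∑ i, α i) ≤ ‖∑ i, w i‖)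
    (hnear : ∀ i, ‖(∑ j, w j) - w i‖ ≤ Real.sin ((∑ j, α j) - α i)) :
    ∀ x : EuclideanSpace ℝ (Fin (d + 1)), ‖x‖ = 1 →
      (∃ i, Real.cos (α i) ≤ ⟪x, u i⟫) →
      Real.cos (∑ i, α i) ≤ ⟪x, ‖∑ i, w i‖⁻¹ • (∑ i, w i)⟫ := by
  intro x hx ⟨i, hxi⟩
  set A : ℝ := ∑ j, α j with hA
  set S : EuclideanSpace ℝ (Fin (d + 1)) := ∑ j, w j with hS
  have hwi : ‖S - w i‖ ≤ Real.sin (A - α i) := hnear i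
  clear_value A S
  -- basic bounds
  have hαiA : α i ≤ A := hA ▸ Finset.single_le_sum (fun j _ => (hα j).le) (Finset.mem_univ i)
  have hαi0 : 0 < α i := hα i
  have hπ : (0:ℝ) < π := Real.pi_pos
  have hαiπ : α i ≤ π / 2 := hαiA.trans hsum
  have hA0 : 0 < A := lt_of_lt_of_le hαi0 hαiA
  have hsinA : 0 < Real.sin A := Real.sin_pos_of_pos_of_lt_pi hA0 (by linarith)
  have hsini : 0 < Real.sin (α i) := Real.sin_pos_of_pos_of_lt_pi hαi0 (by linarith)
  have hsinAi : 0 ≤ Real.sin (A - α i) :=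
    Real.sin_nonneg_of_nonneg_of_le_pi (by linarith) (by linarith)
  have hcosAi : 0 ≤ Real.cos (A - α i) := Real.cos_nonneg_of_mem_Icc ⟨by linarith, by linarith⟩
  have hcosi : 0 ≤ Real.cos (α i) := Real.cos_nonneg_of_mem_Icc ⟨by linarith, by linarith⟩
  have hSpos : 0 < ‖S‖ := lt_of_lt_of_le hsinA hnorm
  have hid : Real.sin A = Real.sin (α i) * Real.cos (A - α i) +
      Real.cos (α i) * Real.sin (A - α i) := by
    rw [← Real.sin_add]; ring_nf
  have hpy1 : Real.sin (α i) ^ 2 + Real.cos (α i) ^ 2 = 1 := Real.sin_sq_add_cos_sq _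
  have hpy2 : Real.sin (A - α i) ^ 2 + Real.cos (A - α i) ^ 2 = 1 := Real.sin_sq_add_cos_sq _
  -- Step 1: ⟪S, u i⟫ ≥ ‖S‖ * cos (A - α i)
  have hexp : ‖S - w i‖ ^ 2 =
      ‖S‖ ^ 2 - 2 * Real.sin (α i) * ⟪S, u i⟫ + Real.sin (α i) ^ 2 := by
    rw [hw i, norm_sub_sq_real, real_inner_smul_right, norm_smul, hu i, Real.norm_eq_abs,
      abs_of_pos hsini, mul_one]
    ring
  have hnear' : ‖S - w i‖ ^ 2 ≤ Real.sin (A - α i) ^ 2 := by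
    nlinarith [norm_nonneg (S - w i)]
  have heq2 : Real.sin A * (2 * Real.sin (α i) * Real.cos (A - α i) - Real.sin A) =
      Real.sin (α i) ^ 2 - Real.sin (A - α i) ^ 2 := by
    have heq : Real.sin (α i) ^ 2 * Real.cos (A - α i) ^ 2 -
        Real.cos (α i) ^ 2 * Real.sin (A - α i) ^ 2 =
        Real.sin (α i) ^ 2 - Real.sin (A - α i) ^ 2 := by
      linear_combination Real.sin (α i) ^ 2 * hpy2 - Real.sin (A - α i) ^ 2 * hpy1
    linear_combination (Real.sin (α i) * Real.cos (A - α i) -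
      Real.cos (α i) * Real.sin (A - α i) - Real.sin A) * hid + heq
  have f1 : (0:ℝ) ≤ ‖S‖ - Real.sin A := by linarith
  have f2 : (0:ℝ) ≤ ‖S‖ - (2 * Real.sin (α i) * Real.cos (A - α i) - Real.sin A) := by
    nlinarith [mul_nonneg hcosi hsinAi]
  have hquad : (0:ℝ) ≤ ‖S‖ ^ 2 - 2 * Real.sin (α i) * Real.cos (A - α i) * ‖S‖ +
      Real.sin (α i) ^ 2 - Real.sin (A - α i) ^ 2 := by
    linarith [mul_nonneg f1 f2]
  have h2 : (2 * Real.sin (α i)) * (‖S‖ * Real.cos (A - α i)) ≤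
      (2 * Real.sin (α i)) * ⟪S, u i⟫ := by linarith [hexp, hnear', hquad]
  have hSu : ‖S‖ * Real.cos (A - α i) ≤ ⟪S, u i⟫ :=
    le_of_mul_le_mul_left h2 (by positivity)
  -- the normalized center
  set c : EuclideanSpace ℝ (Fin (d + 1)) := ‖S‖⁻¹ • S with hc
  clear_value c
  have hcnorm : ‖c‖ = 1 := by
    rw [hc, norm_smul, norm_inv, norm_norm, inv_mul_cancel₀ hSpos.ne']
  have hcu : Real.cos (A - α i) ≤ ⟪c, u i⟫ := by
    rw [hc, real_inner_smul_left]
    have h3 : ‖S‖⁻¹ * (‖S‖ * Real.cos (A - α i)) ≤ ‖S‖⁻¹ * ⟪S, u i⟫ :=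
      mul_le_mul_of_nonneg_left hSu (by positivity)
    rwa [← mul_assoc, inv_mul_cancel₀ hSpos.ne', one_mul] at h3
  -- Step 2: spherical triangle inequality
  set a : ℝ := ⟪x, u i⟫ with ha
  set b : ℝ := ⟪c, u i⟫ with hb
  clear_value a b
  have ha1 : a ≤ 1 := by
    rw [ha]
    calc ⟪x, u i⟫ ≤ ‖x‖ * ‖u i‖ := real_inner_le_norm x (u i)
      _ = 1 := by rw [hx, hu i, mul_one]
  have hb1 : b ≤ 1 := by
    rw [hb]
    calc ⟪c, u i⟫ ≤ ‖c‖ * ‖u i‖ := real_inner_le_norm c (u i)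
      _ = 1 := by rw [hcnorm, hu i, mul_one]
  set x' : EuclideanSpace ℝ (Fin (d + 1)) := x - a • u i with hx'
  set c' : EuclideanSpace ℝ (Fin (d + 1)) := c - b • u i with hc'
  clear_value x' c'
  have hxnorm : ‖x'‖ ^ 2 = 1 - a ^ 2 := by
    rw [hx', norm_sub_sq_real, real_inner_smul_right, norm_smul, hx, hu i, ← ha,
      Real.norm_eq_abs, mul_one, sq_abs]
    ring
  have hcnorm' : ‖c'‖ ^ 2 = 1 - b ^ 2 := by
    rw [hc', norm_sub_sq_real, real_inner_smul_right, norm_smul, hcnorm, hu i, ← hb,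
      Real.norm_eq_abs, mul_one, sq_abs]
    ring
  have hxdec : ⟪x', c'⟫ = ⟪x, c⟫ - a * b := by
    rw [hx', hc']
    simp only [inner_sub_left, inner_sub_right, real_inner_smul_left, real_inner_smul_right]
    rw [real_inner_comm c (u i), real_inner_self_eq_norm_sq, hu i, ← ha, ← hb]
    ring
  have hCS : -(‖x'‖ * ‖c'‖) ≤ ⟪x', c'⟫ := by
    have h4 := abs_real_inner_le_norm x' c'
    have h5 := neg_abs_le (⟪x', c'⟫ : ℝ)
    linarith
  have hxb : ‖x'‖ ≤ Real.sin (α i) := by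
    nlinarith [norm_nonneg x', hxi, hcosi, hsini]
  have hcb : ‖c'‖ ≤ Real.sin (A - α i) := by
    nlinarith [norm_nonneg c', hcu, hcosAi, hsinAi]
  have hid2 : Real.cos A = Real.cos (α i) * Real.cos (A - α i) -
      Real.sin (α i) * Real.sin (A - α i) := by
    rw [← Real.cos_add]; ring_nf
  have hab : Real.cos (α i) * Real.cos (A - α i) ≤ a * b :=
    mul_le_mul hxi hcu hcosAi (by linarith)
  have hprod : ‖x'‖ * ‖c'‖ ≤ Real.sin (α i) * Real.sin (A - α i) :=
    mul_le_mul hxb hcb (norm_nonneg _) hsini.le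
  show Real.cos A ≤ ⟪x, c⟫
  linarith
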